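/- Let gamma ∈ (0,5), eps ∈ (0,1), 0 < s0 ≤ s1, and let phi : [s0,s1] → [0,∞) satisfy ∫_{s0}^{s1} s^gamma·phi(s) ds < ∞. Let b : [s0,s1] → ℝ be differentiable with |b'(s) + b(s)²| ≤ √(phi(s)) and (1-eps)/s ≤ b(s) ≤ (1+eps)/s for all s ∈ [s0,s1]. Then for all s ∈ [s0,s1]: |b(s) - 1/s| ≤ ((1+eps)/(1-eps))·|1/s0 - b(s0)|·s0²/s² + ((1+eps)/((1-eps)²·√(5-gamma)))·s^{(1-gamma)/2}·(∫_{s0}^{s1} t^gamma·phi(t) dt)^{1/2}. -/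

import Mathlib

open Set MeasureTheory Filter
open scoped Topology

lemma cs_step (gamma s0 s : ℝ) (phi : ℝ → ℝ)
    (hg0 : 0 < gamma) (hg5 : gamma < 5) (hs0 : 0 < s0) (hs : s0 ≤ s)
    (hphi : ∀ t ∈ Icc s0 s, 0 ≤ phi t)
    (hint : IntegrableOn (fun t => t ^ gamma * phi t) (Icc s0 s)) :
    ∫ t in Icc s0 s, t ^ 2 * Real.sqrt (phi t) ≤
      s ^ ((5 - gamma)/2) / Real.sqrt (5 - gamma) *
        Real.sqrt (∫ t in Icc s0 s, t ^ gamma * phi t) := by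
  set μ := volume.restrict (Icc s0 s) with hμ
  have hmem : ∀ᵐ t ∂μ, t ∈ Icc s0 s := ae_restrict_mem measurableSet_Icc
  have hpos : ∀ᵐ t ∂μ, 0 < t := hmem.mono fun t ht => lt_of_lt_of_le hs0 ht.1
  set u : ℝ → ℝ := fun t => t ^ ((4 - gamma)/2) with hu
  set w : ℝ → ℝ := fun t => t ^ (gamma/2) * Real.sqrt (phi t) with hw
  have hcont : ∀ p : ℝ, ContinuousOn (fun t : ℝ => t ^ p) (Icc s0 s) := fun p => by
    intro t ht
    exact (Real.continuousAt_rpow_const t p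
      (Or.inl (ne_of_gt (lt_of_lt_of_le hs0 ht.1)))).continuousWithinAt
  have hrm : ∀ p : ℝ, AEStronglyMeasurable (fun t : ℝ => t ^ p) μ := fun p =>
    ((hcont p).aestronglyMeasurable measurableSet_Icc)
  -- measurability of phi on μ
  have hphim : AEStronglyMeasurable phi μ := by
    have h1 : AEStronglyMeasurable (fun t => t ^ (-gamma) * (t ^ gamma * phi t)) μ :=
      (hrm (-gamma)).mul hint.aestronglyMeasurable
    refine h1.congr ?_
    filter_upwards [hpos] with t ht
    rw [← mul_assoc, Real.rpow_neg ht.le,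
      inv_mul_cancel₀ (ne_of_gt (Real.rpow_pos_of_pos ht gamma)), one_mul]
  have hwm : AEStronglyMeasurable w μ :=
    (hrm _).mul (Real.continuous_sqrt.comp_aestronglyMeasurable hphim)
  -- Memℒp facts
  have hu2 : MemLp u 2 μ := by
    rw [memLp_two_iff_integrable_sq (hrm _)]
    exact ContinuousOn.integrableOn_compact isCompact_Icc ((hcont _).pow 2)
  have hwsq : (fun t => t ^ gamma * phi t) =ᵐ[μ] fun t => w t ^ 2 := by
    filter_upwards [hmem, hpos] with t htm ht
    rw [hw]
    rw [mul_pow, ← Real.rpow_natCast (t ^ (gamma/2)) 2, ← Real.rpow_mul ht.le,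
      Real.sq_sqrt (hphi t htm)]
    norm_num
  have hw2 : MemLp w 2 μ := by
    rw [memLp_two_iff_integrable_sq hwm]
    exact hint.congr hwsq
  -- Cauchy-Schwarz
  have hCS : ∫ t, u t * w t ∂μ ≤
      (∫ t, u t ^ (2:ℝ) ∂μ) ^ ((1:ℝ)/2) * (∫ t, w t ^ (2:ℝ) ∂μ) ^ ((1:ℝ)/2) := by
    refine integral_mul_le_Lp_mul_Lq_of_nonneg ⟨by norm_num, by norm_num, by norm_num⟩ ?_ ?_ ?_ ?_
    · filter_upwards [hpos] with t ht; exact (Real.rpow_pos_of_pos ht _).le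
    · filter_upwards [hpos] with t ht
      exact mul_nonneg (Real.rpow_pos_of_pos ht _).le (Real.sqrt_nonneg _)
    · convert hu2 using 2; norm_num
    · convert hw2 using 2; norm_num
  -- rewrite integrand
  have hle1 : ∫ t in Icc s0 s, t ^ 2 * Real.sqrt (phi t) = ∫ t, u t * w t ∂μ := by
    refine integral_congr_ae ?_
    filter_upwards [hpos] with t ht
    rw [hu, hw, ← mul_assoc, ← Real.rpow_add ht,
      show (4-gamma)/2 + gamma/2 = ((2:ℕ):ℝ) by push_cast; ring, Real.rpow_natCast]
  have hwpow : ∫ t, w t ^ (2:ℝ) ∂μ = ∫ t in Icc s0 s, t ^ gamma * phi t := by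
    refine integral_congr_ae ?_
    filter_upwards [hwsq] with t ht
    rw [ht, show (2:ℝ) = ((2:ℕ):ℝ) by norm_num, Real.rpow_natCast]
  have hBnn : 0 ≤ ∫ t in Icc s0 s, t ^ gamma * phi t := by
    refine integral_nonneg_of_ae ?_
    filter_upwards [hmem, hpos] with t htm ht
    exact mul_nonneg (Real.rpow_pos_of_pos ht _).le (hphi t htm)
  have hAnn : 0 ≤ ∫ t, u t ^ (2:ℝ) ∂μ := by
    refine integral_nonneg_of_ae ?_
    filter_upwards [hpos] with t ht
    exact Real.rpow_nonneg (Real.rpow_pos_of_pos ht _).le _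
  have hIA : ∫ t, u t ^ (2:ℝ) ∂μ ≤ s ^ (5 - gamma) / (5 - gamma) := by
    have h1 : ∫ t, u t ^ (2:ℝ) ∂μ = ∫ t in s0..s, t ^ (4 - gamma) := by
      rw [intervalIntegral.integral_of_le hs, ← integral_Icc_eq_integral_Ioc]
      refine integral_congr_ae ?_
      filter_upwards [hpos] with t ht
      rw [hu, ← Real.rpow_mul ht.le]
      congr 1
      ring
    rw [h1, integral_rpow (Or.inl (by linarith)),
      show (4 - gamma + 1) = 5 - gamma by ring]
    have h5 : (0:ℝ) < 5 - gamma := by linarith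
    have h0 : (0:ℝ) ≤ s0 ^ (5 - gamma) := (Real.rpow_pos_of_pos hs0 _).le
    gcongr
    linarith
  have hfin : (∫ t, u t ^ (2:ℝ) ∂μ) ^ ((1:ℝ)/2) * (∫ t, w t ^ (2:ℝ) ∂μ) ^ ((1:ℝ)/2) ≤
      s ^ ((5 - gamma)/2) / Real.sqrt (5 - gamma) *
        Real.sqrt (∫ t in Icc s0 s, t ^ gamma * phi t) := by
    have h5 : (0:ℝ) < 5 - gamma := by linarith
    have hsp : (0:ℝ) < s := lt_of_lt_of_le hs0 hs
    have hB : (∫ t, w t ^ (2:ℝ) ∂μ) ^ ((1:ℝ)/2) =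
        Real.sqrt (∫ t in Icc s0 s, t ^ gamma * phi t) := by
      rw [hwpow, Real.sqrt_eq_rpow]
    rw [hB]
    refine mul_le_mul_of_nonneg_right ?_ (Real.sqrt_nonneg _)
    calc (∫ t, u t ^ (2:ℝ) ∂μ) ^ ((1:ℝ)/2)
        ≤ (s ^ (5 - gamma) / (5 - gamma)) ^ ((1:ℝ)/2) :=
          Real.rpow_le_rpow hAnn hIA (by norm_num)
      _ = s ^ ((5 - gamma)/2) / Real.sqrt (5 - gamma) := by
          rw [Real.div_rpow (Real.rpow_nonneg hsp.le _) h5.le,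
            ← Real.rpow_mul hsp.le, ← Real.sqrt_eq_rpow]
          congr 1
          ring
  calc ∫ t in Icc s0 s, t ^ 2 * Real.sqrt (phi t) = ∫ t, u t * w t ∂μ := hle1
    _ ≤ _ := hCS
    _ ≤ _ := hfin

/-- Estimate on the modulation rate `b`: if `b' + b²` is controlled pointwise by `√φ`
and `b` stays between `(1±ε)/s`, then `b(s)` is close to `1/s` with an explicit rate. -/
theorem modulation_rate_estimate
    (gamma eps s0 s1 : ℝ) (phi b b' : ℝ → ℝ)
    (hgamma : gamma ∈ Ioo (0:ℝ) 5) (heps : eps ∈ Ioo (0:ℝ) 1)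
    (hs0 : 0 < s0) (hs01 : s0 ≤ s1)
    (hphi : ∀ s ∈ Icc s0 s1, 0 ≤ phi s)
    (hint : IntegrableOn (fun s => s ^ gamma * phi s) (Icc s0 s1))
    (hderiv : ∀ s ∈ Icc s0 s1, HasDerivWithinAt b (b' s) (Icc s0 s1) s)
    (hb' : ∀ s ∈ Icc s0 s1, |b' s + b s ^ 2| ≤ Real.sqrt (phi s))
    (hbound : ∀ s ∈ Icc s0 s1, (1 - eps) / s ≤ b s ∧ b s ≤ (1 + eps) / s) :
    ∀ s ∈ Icc s0 s1,
      |b s - 1 / s| ≤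
        (1 + eps) / (1 - eps) * |1 / s0 - b s0| * s0 ^ 2 / s ^ 2 +
        (1 + eps) / ((1 - eps) ^ 2 * Real.sqrt (5 - gamma)) * s ^ ((1 - gamma) / 2) *
          Real.sqrt (∫ t in s0..s1, t ^ gamma * phi t) := by
  obtain ⟨hg0, hg5⟩ := hgamma
  obtain ⟨he0, he1⟩ := heps
  have h1e : (0:ℝ) < 1 - eps := by linarith
  have h1e' : (0:ℝ) < 1 + eps := by linarith
  have htpos : ∀ t ∈ Icc s0 s1, (0:ℝ) < t := fun t ht => lt_of_lt_of_le hs0 ht.1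
  have hbpos : ∀ t ∈ Icc s0 s1, 0 < b t := fun t ht =>
    lt_of_lt_of_le (div_pos h1e (htpos t ht)) (hbound t ht).1
  set f : ℝ → ℝ := fun t => (b t)⁻¹ - t with hf
  set e : ℝ → ℝ := fun t => -((b' t + b t ^ 2) / b t ^ 2) with he
  have hfd : ∀ t ∈ Icc s0 s1, HasDerivWithinAt f (e t) (Icc s0 s1) t := by
    intro t ht
    have h1 := ((hderiv t ht).inv (ne_of_gt (hbpos t ht))).sub (hasDerivWithinAt_id t _)
    refine h1.congr_deriv ?_
    have hb := ne_of_gt (hbpos t ht)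
    rw [he]
    field_simp
    ring
  have hfc : ContinuousOn f (Icc s0 s1) := fun t ht => (hfd t ht).continuousWithinAt
  have hbsq : ∀ t ∈ Icc s0 s1, (1 - eps)^2 / t^2 ≤ b t ^ 2 := by
    intro t ht
    have htp := htpos t ht
    calc (1-eps)^2/t^2 = ((1-eps)/t)^2 := by rw [div_pow]
      _ ≤ b t ^ 2 := pow_le_pow_left₀ (le_of_lt (div_pos h1e htp)) (hbound t ht).1 2
  have heb : ∀ t ∈ Icc s0 s1, |e t| ≤ (1-eps)⁻¹^2 * (t^2 * Real.sqrt (phi t)) := by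
    intro t ht
    have htp := htpos t ht
    calc |e t| = |b' t + b t ^2| / b t ^2 := by
          rw [he, abs_neg, abs_div, abs_of_pos (pow_pos (hbpos t ht) 2)]
      _ ≤ Real.sqrt (phi t) / ((1-eps)^2/t^2) :=
          div_le_div₀ (Real.sqrt_nonneg _) (hb' t ht)
            (div_pos (pow_pos h1e 2) (pow_pos htp 2)) (hbsq t ht)
      _ = (1-eps)⁻¹^2 * (t^2 * Real.sqrt (phi t)) := by
          field_simp
  -- measurability
  have hbc : ContinuousOn b (Icc s0 s1) := fun t ht => (hderiv t ht).continuousWithinAt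
  have hbm : AEStronglyMeasurable b (volume.restrict (Icc s0 s1)) :=
    hbc.aestronglyMeasurable measurableSet_Icc
  have hb'm : AEStronglyMeasurable b' (volume.restrict (Icc s0 s1)) := by
    have hIoo : ∀ᵐ t ∂(volume.restrict (Icc s0 s1)), t ∈ Ioo s0 s1 := by
      rw [← Measure.restrict_congr_set Ioo_ae_eq_Icc]
      exact ae_restrict_mem measurableSet_Ioo
    refine (measurable_deriv b).aestronglyMeasurable.congr ?_
    filter_upwards [hIoo] with t ht
    exact (((hderiv t (Ioo_subset_Icc_self ht)).hasDerivAt (Icc_mem_nhds ht.1 ht.2)).deriv)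
  have hbsqm : AEStronglyMeasurable (fun t => b t ^ 2) (volume.restrict (Icc s0 s1)) :=
    (hbc.pow 2).aestronglyMeasurable measurableSet_Icc
  have hem : AEStronglyMeasurable e (volume.restrict (Icc s0 s1)) :=
    (((hb'm.aemeasurable.add hbsqm.aemeasurable).div hbsqm.aemeasurable).neg).aestronglyMeasurable
  -- phi integrable
  have hmem1 : ∀ᵐ t ∂(volume.restrict (Icc s0 s1)), t ∈ Icc s0 s1 :=
    ae_restrict_mem measurableSet_Icc
  have hphim : AEStronglyMeasurable phi (volume.restrict (Icc s0 s1)) := by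
    have hc : ContinuousOn (fun t : ℝ => t ^ (-gamma)) (Icc s0 s1) := fun t ht =>
      (Real.continuousAt_rpow_const t (-gamma)
        (Or.inl (ne_of_gt (htpos t ht)))).continuousWithinAt
    have h1 : AEStronglyMeasurable (fun t => t ^ (-gamma) * (t ^ gamma * phi t))
        (volume.restrict (Icc s0 s1)) :=
      (hc.aestronglyMeasurable measurableSet_Icc).mul hint.aestronglyMeasurable
    refine h1.congr ?_
    filter_upwards [hmem1] with t ht
    have htp := htpos t ht
    rw [← mul_assoc, Real.rpow_neg htp.le,
      inv_mul_cancel₀ (ne_of_gt (Real.rpow_pos_of_pos htp gamma)), one_mul]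
  have hphiint : IntegrableOn phi (Icc s0 s1) := by
    refine Integrable.mono' (hint.const_mul (s0 ^ gamma)⁻¹) hphim ?_
    filter_upwards [hmem1] with t ht
    have htp := htpos t ht
    have h1 : s0 ^ gamma ≤ t ^ gamma := Real.rpow_le_rpow hs0.le ht.1 hg0.le
    have h2 : 0 < s0 ^ gamma := Real.rpow_pos_of_pos hs0 _
    have h3 : s0 ^ gamma * phi t ≤ t ^ gamma * phi t :=
      mul_le_mul_of_nonneg_right h1 (hphi t ht)
    rw [Real.norm_eq_abs, abs_of_nonneg (hphi t ht)]
    calc phi t = (s0^gamma)⁻¹ * (s0^gamma * phi t) := by field_simp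
      _ ≤ (s0^gamma)⁻¹ * (t^gamma * phi t) := mul_le_mul_of_nonneg_left h3 (inv_nonneg.2 h2.le)
  -- integrability of the dominating function
  have hsqm : AEStronglyMeasurable (fun t => t^2 * Real.sqrt (phi t))
      (volume.restrict (Icc s0 s1)) :=
    (continuous_pow 2).aestronglyMeasurable.restrict.mul
      (Real.continuous_sqrt.comp_aestronglyMeasurable hphim)
  have hsqint : IntegrableOn (fun t => t^2 * Real.sqrt (phi t)) (Icc s0 s1) := by
    have hdom : IntegrableOn (fun t => s1^2 * (1 + phi t)) (Icc s0 s1) :=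
      ((integrableOn_const (C := (1:ℝ)) measure_Icc_lt_top.ne).add hphiint).const_mul _
    refine Integrable.mono' hdom hsqm ?_
    filter_upwards [hmem1] with t ht
    have htp := htpos t ht
    have h1 : Real.sqrt (phi t) ≤ 1 + phi t := by
      have hx : phi t ≤ (1 + phi t)^2 := by nlinarith [hphi t ht]
      calc Real.sqrt (phi t) ≤ Real.sqrt ((1 + phi t)^2) := Real.sqrt_le_sqrt hx
        _ = 1 + phi t := Real.sqrt_sq (by nlinarith [hphi t ht])
    have h2 : t^2 ≤ s1^2 := by nlinarith [ht.1, ht.2]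
    rw [Real.norm_eq_abs, abs_of_nonneg (mul_nonneg (sq_nonneg t) (Real.sqrt_nonneg _))]
    calc t^2 * Real.sqrt (phi t) ≤ s1^2 * Real.sqrt (phi t) :=
          mul_le_mul_of_nonneg_right h2 (Real.sqrt_nonneg _)
      _ ≤ s1^2 * (1 + phi t) := mul_le_mul_of_nonneg_left h1 (sq_nonneg s1)
  set g : ℝ → ℝ := fun t => (1-eps)⁻¹^2 * (t^2 * Real.sqrt (phi t)) with hg
  have hgint : IntegrableOn g (Icc s0 s1) := hsqint.const_mul _
  have heint : IntegrableOn e (Icc s0 s1) := by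
    refine Integrable.mono' hgint hem ?_
    filter_upwards [hmem1] with t ht
    rw [Real.norm_eq_abs]
    exact heb t ht
  -- fix s
  intro s hs
  have hss : s0 ≤ s := hs.1
  have hsp : 0 < s := htpos s hs
  have hsub : Icc s0 s ⊆ Icc s0 s1 := Icc_subset_Icc_right hs.2
  -- FTC
  have hFTC : ∫ t in s0..s, e t = f s - f s0 := by
    refine intervalIntegral.integral_eq_sub_of_hasDeriv_right_of_le hss (hfc.mono hsub) ?_ ?_
    · intro x hx
      have hx2 : x ∈ Ioo s0 s1 := ⟨hx.1, lt_of_lt_of_le hx.2 hs.2⟩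
      exact (((hfd x (Ioo_subset_Icc_self hx2)).hasDerivAt
        (Icc_mem_nhds hx2.1 hx2.2)).hasDerivWithinAt)
    · rw [intervalIntegrable_iff_integrableOn_Icc_of_le hss]
      exact heint.mono_set hsub
  have hgii : IntervalIntegrable g volume s0 s := by
    rw [intervalIntegrable_iff_integrableOn_Icc_of_le hss]
    exact hgint.mono_set hsub
  have habs : |f s - f s0| ≤ ∫ t in s0..s, g t := by
    have hbnd : ∀ᵐ t ∂(volume.restrict (Set.uIoc s0 s)), ‖e t‖ ≤ g t := by
      rw [uIoc_of_le hss]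
      filter_upwards [ae_restrict_mem measurableSet_Ioc] with t ht
      have ht1 : t ∈ Icc s0 s1 := ⟨ht.1.le, ht.2.trans hs.2⟩
      rw [Real.norm_eq_abs]
      exact heb t ht1
    rw [← hFTC, ← Real.norm_eq_abs]
    refine le_trans (intervalIntegral.norm_integral_le_abs_of_norm_le hbnd hgii)
      (le_of_eq (abs_of_nonneg ?_))
    refine intervalIntegral.integral_nonneg hss fun t ht => ?_
    show 0 ≤ (1-eps)⁻¹^2 * (t^2 * Real.sqrt (phi t))
    positivity
  -- apply Cauchy-Schwarz
  set J := ∫ t in s0..s1, t ^ gamma * phi t with hJ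
  have hJnn : 0 ≤ J := by
    rw [hJ, intervalIntegral.integral_of_le hs01]
    refine integral_nonneg_of_ae ?_
    filter_upwards [ae_restrict_mem measurableSet_Ioc] with t ht
    exact mul_nonneg (Real.rpow_pos_of_pos (lt_trans hs0 ht.1) _).le
      (hphi t ⟨ht.1.le, ht.2⟩)
  have hKle : ∫ t in s0..s, g t ≤
      (1-eps)⁻¹^2 * (s ^ ((5-gamma)/2) / Real.sqrt (5-gamma) * Real.sqrt J) := by
    rw [hg, intervalIntegral.integral_const_mul]
    refine mul_le_mul_of_nonneg_left ?_ (by positivity)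
    have hcs := cs_step gamma s0 s phi hg0 hg5 hs0 hss
      (fun t ht => hphi t (hsub ht)) (hint.mono_set hsub)
    have hmono : ∫ t in Icc s0 s, t ^ gamma * phi t ≤ J := by
      rw [hJ, intervalIntegral.integral_of_le hs01, ← integral_Icc_eq_integral_Ioc]
      refine setIntegral_mono_set hint ?_ (HasSubset.Subset.eventuallyLE hsub)
      filter_upwards [hmem1] with t ht
      exact mul_nonneg (Real.rpow_pos_of_pos (htpos t ht) _).le (hphi t ht)
    calc ∫ t in s0..s, t^2 * Real.sqrt (phi t)
        = ∫ t in Icc s0 s, t^2 * Real.sqrt (phi t) := by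
          rw [intervalIntegral.integral_of_le hss, integral_Icc_eq_integral_Ioc]
      _ ≤ s ^ ((5-gamma)/2) / Real.sqrt (5-gamma) *
            Real.sqrt (∫ t in Icc s0 s, t ^ gamma * phi t) := hcs
      _ ≤ s ^ ((5-gamma)/2) / Real.sqrt (5-gamma) * Real.sqrt J := by
          refine mul_le_mul_of_nonneg_left (Real.sqrt_le_sqrt hmono) (by positivity)
  -- bound at s0
  have hmem0 : s0 ∈ Icc s0 s1 := ⟨le_rfl, hs01⟩
  have hb0 := hbpos s0 hmem0
  have hfs0 : |f s0| ≤ s0^2 * |1/s0 - b s0| / (1-eps) := by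
    have h1 : f s0 = s0 * (1/s0 - b s0) / b s0 := by
      rw [hf]
      field_simp
    rw [h1, abs_div, abs_mul, abs_of_pos hs0, abs_of_pos hb0, div_le_div_iff₀ hb0 h1e]
    have h2 : (1-eps) ≤ s0 * b s0 := by
      have := (hbound s0 hmem0).1
      rw [div_le_iff₀ hs0] at this
      linarith [this, mul_comm s0 (b s0)]
    nlinarith [mul_le_mul_of_nonneg_left h2 (mul_nonneg hs0.le (abs_nonneg (1/s0 - b s0)))]
  -- final assembly
  have hbs : b s - 1/s = -(f s) * b s / s := by
    rw [hf]
    have hbsne := ne_of_gt (hbpos s hs)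
    field_simp
    ring
  have habs2 : |b s - 1/s| = |f s| * (b s / s) := by
    rw [hbs, ← mul_div_assoc, abs_div, abs_mul, abs_neg, abs_of_pos (hbpos s hs),
      abs_of_pos hsp, mul_div_assoc]
  have hbss : b s / s ≤ (1+eps)/s^2 := by
    have h1 : b s ≤ (1+eps)/s := (hbound s hs).2
    rw [div_le_div_iff₀ hsp (pow_pos hsp 2)]
    calc b s * s^2 ≤ ((1+eps)/s) * s^2 := mul_le_mul_of_nonneg_right h1 (sq_nonneg s)
      _ = (1+eps) * s := by field_simp
  have hfsb : |f s| ≤ s0^2 * |1/s0 - b s0| / (1-eps) +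
      (1-eps)⁻¹^2 * (s ^ ((5-gamma)/2) / Real.sqrt (5-gamma) * Real.sqrt J) := by
    have h1 : |f s| ≤ |f s0| + |f s - f s0| := by
      calc |f s| = |f s0 + (f s - f s0)| := by ring_nf
        _ ≤ |f s0| + |f s - f s0| := abs_add_le _ _
    linarith [habs, hKle, hfs0]
  have hQ : 0 < Real.sqrt (5 - gamma) := Real.sqrt_pos.2 (by linarith)
  have hsplit : s ^ ((5-gamma)/2) = s ^ ((1-gamma)/2) * s^2 := by
    rw [← Real.rpow_natCast s 2, ← Real.rpow_add hsp]
    congr 1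
    push_cast
    ring
  calc |b s - 1/s| = |f s| * (b s / s) := habs2
    _ ≤ |f s| * ((1+eps)/s^2) := by
        refine mul_le_mul_of_nonneg_left hbss (abs_nonneg _)
    _ ≤ (s0^2 * |1/s0 - b s0| / (1-eps) +
          (1-eps)⁻¹^2 * (s ^ ((5-gamma)/2) / Real.sqrt (5-gamma) * Real.sqrt J)) *
          ((1+eps)/s^2) := by
        refine mul_le_mul_of_nonneg_right hfsb (by positivity)
    _ = (1 + eps) / (1 - eps) * |1 / s0 - b s0| * s0 ^ 2 / s ^ 2 +
        (1 + eps) / ((1 - eps) ^ 2 * Real.sqrt (5 - gamma)) * s ^ ((1 - gamma) / 2) *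
          Real.sqrt J := by
        rw [hsplit]
        field_simp
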